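/- Let p be a prime, A an m×n matrix over ℤ/p and b ∈ (ℤ/p)^m. There exists a unital *-algebra homomorphism φ : 𝒜(Iso(G_{A,b}, G_{A,0})) → 𝒜(syncLCS(A,b)) such that for every vertex (i,x) of G_{A,b} and every vertex (j,y) of G_{A,0}, the generator corresponding to input (i,x) and output (j,y) (equivalently, input (j,y) and output (i,x)) is sent to a_{i,x+y} if i = j and to 0 if i ≠ j, and every generator whose input and output lie in the same graph is sent to 0. -/

import Mathlib

set_option maxHeartbeats 1000000
noncomputable section

/-! ### The conjugate-linear star structure on a monoid algebra `ℂ[M]`,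
where `M` is a monoid with an (anti-multiplicative) star operation.
For a group `G` (with `star = ⁻¹`, see below) this is the usual star structure
`(λ·g)* = conj(λ)·g⁻¹` on the group `*`-algebra `ℂG`. -/

section MonoidAlgebraStar

variable {M : Type*} [Monoid M] [StarMul M]

/-- the star operation on `ℂ[M]`: `(λ·m)* = conj(λ)·(star m)` -/
noncomputable def mstar (f : MonoidAlgebra ℂ M) : MonoidAlgebra ℂ M :=
  Finsupp.equivMapDomain ⟨star, star, star_involutive, star_involutive⟩
    (Finsupp.mapRange (starRingEnd ℂ) (map_zero _) f.coeff) |> MonoidAlgebra.ofCoeff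

lemma mstar_apply (f : MonoidAlgebra ℂ M) (x : M) :
    (mstar f).coeff x = starRingEnd ℂ (f.coeff (star x)) := rfl

lemma mstar_single (a : M) (c : ℂ) :
    mstar (MonoidAlgebra.single a c) = MonoidAlgebra.single (star a) (starRingEnd ℂ c) := by
  classical
  ext x
  show starRingEnd ℂ ((Finsupp.single a c) (star x)) =
    (Finsupp.single (star a) (starRingEnd ℂ c)) x
  simp only [Finsupp.single_apply]
  by_cases h : a = star x
  · rw [if_pos h, if_pos (by rw [h, star_star])]
  · rw [if_neg h, if_neg (fun h2 => h (by rw [← h2, star_star])), map_zero]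

lemma mstar_add (f g : MonoidAlgebra ℂ M) : mstar (f + g) = mstar f + mstar g := by
  ext x
  exact map_add (starRingEnd ℂ) (f.coeff (star x)) (g.coeff (star x))

lemma mstar_zero : mstar (0 : MonoidAlgebra ℂ M) = 0 := by
  ext x
  exact map_zero (starRingEnd ℂ)

lemma mstar_mul (f g : MonoidAlgebra ℂ M) : mstar (f * g) = mstar g * mstar f := by
  induction f using MonoidAlgebra.induction_linear with
  | zero =>
      exact (congrArg mstar (zero_mul g)).trans (mstar_zero.trans
        ((mul_zero (mstar g)).symm.trans (congrArg _ mstar_zero.symm)))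
  | add f1 f2 h1 h2 =>
      refine Eq.trans (congrArg mstar (@add_mul (MonoidAlgebra ℂ M) _ _ _ f1 f2 g)) ?_
      rw [mstar_add, h1, h2, ← mul_add]
      exact congrArg (mstar g * ·) (mstar_add f1 f2).symm
  | single a c =>
    induction g using MonoidAlgebra.induction_linear with
    | zero =>
        exact (congrArg mstar (mul_zero _)).trans (mstar_zero.trans
          ((zero_mul _).symm.trans (congrArg (· * _) mstar_zero.symm)))
    | add g1 g2 h1 h2 =>
        refine Eq.trans (congrArg mstar (@mul_add (MonoidAlgebra ℂ M) _ _ _ _ g1 g2)) ?_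
        rw [mstar_add, h1, h2, ← add_mul]
        exact congrArg (· * mstar (MonoidAlgebra.single a c)) (mstar_add g1 g2).symm
    | single b d =>
      show mstar ((MonoidAlgebra.single a c) * (MonoidAlgebra.single b d)) =
        mstar (MonoidAlgebra.single b d) * mstar (MonoidAlgebra.single a c)
      rw [MonoidAlgebra.single_mul_single, mstar_single, mstar_single, mstar_single,
        MonoidAlgebra.single_mul_single, star_mul, map_mul, mul_comm (starRingEnd ℂ d)]

/-- the `*`-ring structure of `ℂ[M]` -/
noncomputable instance instMAStar : StarRing (MonoidAlgebra ℂ M) where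
  star := mstar
  star_involutive f := by
    ext x
    calc (mstar (mstar f)).coeff x = starRingEnd ℂ (starRingEnd ℂ (f.coeff (star (star x)))) := rfl
      _ = f.coeff (star (star x)) := Complex.conj_conj _
      _ = f.coeff x := congrArg (fun y => f.coeff y) (star_star x)
  star_mul := mstar_mul
  star_add := mstar_add

lemma star_of' (a : M) :
    star (MonoidAlgebra.of ℂ M a) = MonoidAlgebra.of ℂ M (star a) := by
  show mstar _ = _
  rw [show (MonoidAlgebra.of ℂ M a : MonoidAlgebra ℂ M) = MonoidAlgebra.single a 1 from rfl,
    mstar_single, map_one]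
  rfl

end MonoidAlgebraStar

section LinearSystem

variable {p m n : ℕ}

/-- `V_i`, the support of the `i`-th row of `A` -/
def Vset (A : Matrix (Fin m) (Fin n) (ZMod p)) (i : Fin m) : Finset (Fin n) :=
  Finset.univ.filter fun j => A i j ≠ 0

/-- `S_i(A,b)`: solutions of the `i`-th equation supported inside `V_i` -/
def Ssol [NeZero p] (A : Matrix (Fin m) (Fin n) (ZMod p)) (b : Fin m → ZMod p) (i : Fin m) :
    Finset (Fin n → ZMod p) :=
  Finset.univ.filter fun x => (∑ j, A i j * x j) = b i ∧ ∀ j, x j ≠ 0 → j ∈ Vset A i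

/-- `(x,y)` are incompatible solutions for rows `(i,k)` -/
def Incompat (A : Matrix (Fin m) (Fin n) (ZMod p)) (i k : Fin m)
    (x y : Fin n → ZMod p) : Prop :=
  ∃ j ∈ Vset A i ∩ Vset A k, x j ≠ y j

lemma Incompat.symm {A : Matrix (Fin m) (Fin n) (ZMod p)} {i k : Fin m}
    {x y : Fin n → ZMod p} (h : Incompat A i k x y) : Incompat A k i y x := by
  obtain ⟨j, hj, hne⟩ := h
  exact ⟨j, by simpa [Finset.mem_inter, and_comm] using hj, hne.symm⟩

end LinearSystem

section GameAlgebra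

variable {p m n : ℕ}

/-- the index set of the generators `a_{i,x}` of the game algebra: pairs `(i, x)` with
`x ∈ S_i(A,b)` -/
abbrev SyncGen [NeZero p] (A : Matrix (Fin m) (Fin n) (ZMod p)) (b : Fin m → ZMod p) : Type _ :=
  Σ i : Fin m, {x : Fin n → ZMod p // x ∈ Ssol A b i}

/-- the free unital complex `*`-algebra on a set `X` of self-adjoint generators -/
abbrev FreeStarAlg (X : Type*) := MonoidAlgebra ℂ (FreeMonoid X)

/-- a generator of the free `*`-algebra -/
noncomputable def Xg {X : Type*} (x : X) : FreeStarAlg X :=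
  MonoidAlgebra.of ℂ (FreeMonoid X) (FreeMonoid.of x)

lemma starX {X : Type*} (x : X) : star (Xg x) = Xg x := by
  rw [Xg, star_of', FreeMonoid.star_of]

/-- the defining relations of the game algebra `𝒜(syncLCS(A,b))`: the generators are
self-adjoint (automatic here) idempotents, for each row the generators sum to one, and
incompatible pairs are orthogonal. -/
inductive SyncRel [NeZero p] (A : Matrix (Fin m) (Fin n) (ZMod p)) (b : Fin m → ZMod p) :
    FreeStarAlg (SyncGen A b) → FreeStarAlg (SyncGen A b) → Prop
  | idem (g : SyncGen A b) : SyncRel A b (Xg g * Xg g) (Xg g)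
  | sum_one (i : Fin m) :
      SyncRel A b (∑ x ∈ (Ssol A b i).attach, Xg (⟨i, x⟩ : SyncGen A b)) 1
  | orth {i k : Fin m} (x : {x // x ∈ Ssol A b i}) (y : {y // y ∈ Ssol A b k})
      (h : Incompat A i k x.1 y.1) :
      SyncRel A b (Xg (⟨i, x⟩ : SyncGen A b) * Xg (⟨k, y⟩ : SyncGen A b)) 0

lemma SyncRel.star_closed [NeZero p] (A : Matrix (Fin m) (Fin n) (ZMod p)) (b : Fin m → ZMod p) :
    ∀ a c, SyncRel A b a c → SyncRel A b (star a) (star c) := by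
  intro a c h
  cases h with
  | idem g => rw [star_mul, starX]; exact SyncRel.idem g
  | sum_one i =>
      rw [star_sum, star_one]
      simp only [starX]
      exact SyncRel.sum_one i
  | orth x y h =>
      rw [star_mul, starX, starX, star_zero]
      exact SyncRel.orth y x h.symm

/-- The game algebra `𝒜(syncLCS(A,b))`: the quotient of the free `*`-algebra on the
generators `a_{i,x}` by the `*`-ideal generated by the game relations. -/
abbrev GameAlg [NeZero p] (A : Matrix (Fin m) (Fin n) (ZMod p)) (b : Fin m → ZMod p) :=
  RingQuot (SyncRel A b)

noncomputable instance [NeZero p] (A : Matrix (Fin m) (Fin n) (ZMod p)) (b : Fin m → ZMod p) :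
    StarRing (GameAlg A b) :=
  RingQuot.starRing _ (SyncRel.star_closed A b)

/-- the generator `a_{i,x}` of the game algebra `𝒜(syncLCS(A,b))` -/
noncomputable def agen [NeZero p] (A : Matrix (Fin m) (Fin n) (ZMod p)) (b : Fin m → ZMod p)
    (i : Fin m) (x : Fin n → ZMod p) (hx : x ∈ Ssol A b i) : GameAlg A b :=
  RingQuot.mkAlgHom ℂ (SyncRel A b) (Xg ⟨i, ⟨x, hx⟩⟩)

end GameAlgebra

section IsoGame

variable {p m n : ℕ}

/-- the graph `G_{A,b}`: vertices are pairs `(i,x)` with `x ∈ S_i(A,b)`, and two vertices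
are adjacent iff they are incompatible solutions -/
def lsGraph [NeZero p] (A : Matrix (Fin m) (Fin n) (ZMod p)) (b : Fin m → ZMod p) :
    SimpleGraph (SyncGen A b) where
  Adj v w := Incompat A v.1 w.1 v.2.1 w.2.1
  symm := ⟨fun _ _ h => h.symm⟩
  loopless := ⟨fun v h => by obtain ⟨j, _, hne⟩ := h; exact hne rfl⟩

/-- the rule predicate of the graph isomorphism game `Iso(G,H)`:
`IsoWin G H v w x y` holds iff on inputs `(v,w)` the answers `(x,y)` win, i.e.
`v,x` are in different graphs, `w,y` are in different graphs, and if `v,w` are in the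
same graph then their relationship (equal / adjacent / distinct non-adjacent) is
satisfied by `x,y` as well. -/
def IsoWin {VG VH : Type*} (G : SimpleGraph VG) (H : SimpleGraph VH) :
    VG ⊕ VH → VG ⊕ VH → VG ⊕ VH → VG ⊕ VH → Prop
  | Sum.inl v, Sum.inl w, Sum.inr x, Sum.inr y => (v = w ↔ x = y) ∧ (G.Adj v w ↔ H.Adj x y)
  | Sum.inl _, Sum.inr _, Sum.inr _, Sum.inl _ => True
  | Sum.inr _, Sum.inl _, Sum.inl _, Sum.inr _ => True
  | Sum.inr v, Sum.inr w, Sum.inl x, Sum.inl y => (v = w ↔ x = y) ∧ (H.Adj v w ↔ G.Adj x y)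
  | _, _, _, _ => False

/-- the defining relations of the game algebra `𝒜(Iso(G,H))`: the generators
`e_{v,x}` (for an input `v` and an output `x`) are self-adjoint (automatic here)
idempotents, for every input the generators sum to one over all outputs, and losing
pairs are orthogonal (the relation set is closed under `*`). -/
inductive IsoRel {VG VH : Type*} [Fintype VG] [Fintype VH]
    (G : SimpleGraph VG) (H : SimpleGraph VH) :
    FreeStarAlg ((VG ⊕ VH) × (VG ⊕ VH)) → FreeStarAlg ((VG ⊕ VH) × (VG ⊕ VH)) → Prop
  | idem (g : (VG ⊕ VH) × (VG ⊕ VH)) : IsoRel G H (Xg g * Xg g) (Xg g)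
  | sum_one (v : VG ⊕ VH) : IsoRel G H (∑ x : VG ⊕ VH, Xg (v, x)) 1
  | orth {v w x y : VG ⊕ VH} (h : ¬ IsoWin G H v w x y) :
      IsoRel G H (Xg (v, x) * Xg (w, y)) 0
  | orth' {v w x y : VG ⊕ VH} (h : ¬ IsoWin G H v w x y) :
      IsoRel G H (Xg (w, y) * Xg (v, x)) 0

lemma IsoRel.star_closed {VG VH : Type*} [Fintype VG] [Fintype VH]
    (G : SimpleGraph VG) (H : SimpleGraph VH) :
    ∀ a c, IsoRel G H a c → IsoRel G H (star a) (star c) := by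
  intro a c h
  cases h with
  | idem g => rw [star_mul, starX]; exact IsoRel.idem g
  | sum_one v =>
      rw [star_sum, star_one]
      simp only [starX]
      exact IsoRel.sum_one v
  | orth h => rw [star_mul, starX, starX, star_zero]; exact IsoRel.orth' h
  | orth' h => rw [star_mul, starX, starX, star_zero]; exact IsoRel.orth h

/-- The game algebra `𝒜(Iso(G,H))` of the graph isomorphism game. -/
abbrev IsoAlg {VG VH : Type*} [Fintype VG] [Fintype VH]
    (G : SimpleGraph VG) (H : SimpleGraph VH) :=
  RingQuot (IsoRel G H)

noncomputable instance {VG VH : Type*} [Fintype VG] [Fintype VH]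
    (G : SimpleGraph VG) (H : SimpleGraph VH) : StarRing (IsoAlg G H) :=
  RingQuot.starRing _ (IsoRel.star_closed G H)

/-- the generator `e_{v,x}` of `𝒜(Iso(G,H))` for input `v` and output `x` -/
noncomputable def egen {VG VH : Type*} [Fintype VG] [Fintype VH]
    (G : SimpleGraph VG) (H : SimpleGraph VH) (v x : VG ⊕ VH) : IsoAlg G H :=
  RingQuot.mkAlgHom ℂ (IsoRel G H) (Xg (v, x))

/-- `(i, 0)` is a vertex of `G_{A,0}` -/
lemma zero_mem_Ssol [NeZero p] (A : Matrix (Fin m) (Fin n) (ZMod p)) (k : Fin m) :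
    (0 : Fin n → ZMod p) ∈ Ssol A (0 : Fin m → ZMod p) k := by
  simp [Ssol]

end IsoGame
section Proof

variable {p m n : ℕ}

lemma mem_Ssol_iff [NeZero p] {A : Matrix (Fin m) (Fin n) (ZMod p)} {b : Fin m → ZMod p}
    {i : Fin m} {x : Fin n → ZMod p} :
    x ∈ Ssol A b i ↔ (∑ j, A i j * x j) = b i ∧ ∀ j, x j ≠ 0 → A i j ≠ 0 := by
  simp [Ssol, Vset]

lemma Ssol_apply_eq_zero [NeZero p] {A : Matrix (Fin m) (Fin n) (ZMod p)} {b : Fin m → ZMod p}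
    {i : Fin m} {x : Fin n → ZMod p} (hx : x ∈ Ssol A b i) {j : Fin n} (hA : A i j = 0) :
    x j = 0 := by
  by_contra h
  exact (mem_Ssol_iff.1 hx).2 j h hA

lemma add_mem_Ssol [NeZero p] {A : Matrix (Fin m) (Fin n) (ZMod p)} {b : Fin m → ZMod p}
    {i : Fin m} {x y : Fin n → ZMod p}
    (hx : x ∈ Ssol A b i) (hy : y ∈ Ssol A (0 : Fin m → ZMod p) i) : x + y ∈ Ssol A b i := by
  rw [mem_Ssol_iff] at hx hy ⊢
  refine ⟨?_, ?_⟩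
  · simp only [Pi.add_apply, mul_add, Finset.sum_add_distrib, hx.1, hy.1, Pi.zero_apply, add_zero]
  · intro j hj
    by_contra hA
    have h1 : x j = 0 := by by_contra h; exact (hx.2 j h) hA
    have h2 : y j = 0 := by by_contra h; exact (hy.2 j h) hA
    exact hj (by simp [h1, h2])

lemma sub_mem_Ssol0 [NeZero p] {A : Matrix (Fin m) (Fin n) (ZMod p)} {b : Fin m → ZMod p}
    {i : Fin m} {z x : Fin n → ZMod p}
    (hz : z ∈ Ssol A b i) (hx : x ∈ Ssol A b i) : z - x ∈ Ssol A (0 : Fin m → ZMod p) i := by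
  rw [mem_Ssol_iff] at hz hx ⊢
  refine ⟨?_, ?_⟩
  · simp only [Pi.sub_apply, mul_sub, Finset.sum_sub_distrib, hz.1, hx.1, Pi.zero_apply, sub_self]
  · intro j hj
    by_contra hA
    have h1 : z j = 0 := by by_contra h; exact (hz.2 j h) hA
    have h2 : x j = 0 := by by_contra h; exact (hx.2 j h) hA
    exact hj (by simp [h1, h2])

lemma sub_mem_Ssolb [NeZero p] {A : Matrix (Fin m) (Fin n) (ZMod p)} {b : Fin m → ZMod p}
    {i : Fin m} {z y : Fin n → ZMod p}
    (hz : z ∈ Ssol A b i) (hy : y ∈ Ssol A (0 : Fin m → ZMod p) i) : z - y ∈ Ssol A b i := by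
  rw [mem_Ssol_iff] at hz hy ⊢
  refine ⟨?_, ?_⟩
  · simp only [Pi.sub_apply, mul_sub, Finset.sum_sub_distrib, hz.1, hy.1, Pi.zero_apply, sub_zero]
  · intro j hj
    by_contra hA
    have h1 : z j = 0 := by by_contra h; exact (hz.2 j h) hA
    have h2 : y j = 0 := by by_contra h; exact (hy.2 j h) hA
    exact hj (by simp [h1, h2])

lemma not_incompat_iff {A : Matrix (Fin m) (Fin n) (ZMod p)} {i k : Fin m}
    {u w : Fin n → ZMod p} :
    ¬ Incompat A i k u w ↔ ∀ j, A i j ≠ 0 → A k j ≠ 0 → u j = w j := by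
  unfold Incompat
  push_neg
  simp [Vset]

lemma key_lemma [NeZero p] {A : Matrix (Fin m) (Fin n) (ZMod p)} {b c b' c' : Fin m → ZMod p}
    {i k : Fin m} {xv xo yv yo : Fin n → ZMod p}
    (hxv : xv ∈ Ssol A b i) (hxo : xo ∈ Ssol A c i)
    (hyv : yv ∈ Ssol A b' k) (hyo : yo ∈ Ssol A c' k)
    (hc : ¬ Incompat A i k (xv + xo) (yv + yo)) :
    (i = k → (xv = yv ↔ xo = yo)) ∧ (Incompat A i k xv yv ↔ Incompat A i k xo yo) := by
  rw [not_incompat_iff] at hc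
  constructor
  · rintro rfl
    have hsum : xv + xo = yv + yo := by
      funext j
      by_cases hA : A i j = 0
      · simp [Ssol_apply_eq_zero hxv hA, Ssol_apply_eq_zero hxo hA,
          Ssol_apply_eq_zero hyv hA, Ssol_apply_eq_zero hyo hA]
      · exact hc j hA hA
    constructor
    · rintro rfl; exact add_left_cancel hsum
    · rintro rfl; exact add_right_cancel hsum
  · constructor
    · rintro ⟨j, hj, hne⟩
      rw [Finset.mem_inter] at hj
      have h1 : A i j ≠ 0 := by simpa [Vset] using hj.1
      have h2 : A k j ≠ 0 := by simpa [Vset] using hj.2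
      have h3 : xv j + xo j = yv j + yo j := hc j h1 h2
      refine ⟨j, Finset.mem_inter.2 hj, fun h => hne ?_⟩
      rw [h] at h3
      exact add_right_cancel h3
    · rintro ⟨j, hj, hne⟩
      rw [Finset.mem_inter] at hj
      have h1 : A i j ≠ 0 := by simpa [Vset] using hj.1
      have h2 : A k j ≠ 0 := by simpa [Vset] using hj.2
      have h3 : xv j + xo j = yv j + yo j := hc j h1 h2
      refine ⟨j, Finset.mem_inter.2 hj, fun h => hne ?_⟩
      rw [h] at h3
      exact add_left_cancel h3

lemma sg_eq_iff [NeZero p] {A : Matrix (Fin m) (Fin n) (ZMod p)} {b : Fin m → ZMod p}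
    {i k : Fin m} {x : {x // x ∈ Ssol A b i}} {y : {y // y ∈ Ssol A b k}} :
    (⟨i, x⟩ : SyncGen A b) = ⟨k, y⟩ ↔ i = k ∧ x.1 = y.1 := by
  constructor
  · intro h
    obtain ⟨rfl, h2⟩ := Sigma.mk.inj_iff.1 h
    exact ⟨rfl, congrArg Subtype.val (eq_of_heq h2)⟩
  · rintro ⟨rfl, h⟩
    exact congrArg _ (Subtype.ext h)

section GA

variable [NeZero p] (A : Matrix (Fin m) (Fin n) (ZMod p)) (b : Fin m → ZMod p)

lemma star_mk_sync (a : FreeStarAlg (SyncGen A b)) :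
    star (RingQuot.mkAlgHom ℂ (SyncRel A b) a) = RingQuot.mkAlgHom ℂ (SyncRel A b) (star a) := by
  simp only [RingQuot.mkAlgHom_def, RingQuot.mkRingHom_def, AlgHom.coe_mk, RingHom.coe_mk,
    MonoidHom.coe_mk, OneHom.coe_mk]
  exact rfl

lemma star_agen (i : Fin m) (x : Fin n → ZMod p) (hx : x ∈ Ssol A b i) :
    star (agen A b i x hx) = agen A b i x hx := by
  rw [agen, star_mk_sync, starX]

lemma agen_idem (i : Fin m) (x : Fin n → ZMod p) (hx : x ∈ Ssol A b i) :
    agen A b i x hx * agen A b i x hx = agen A b i x hx := by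
  rw [agen, ← map_mul]
  exact RingQuot.mkAlgHom_rel ℂ (SyncRel.idem ⟨i, ⟨x, hx⟩⟩)

lemma agen_mul_incompat {i k : Fin m} {x y : Fin n → ZMod p}
    (hx : x ∈ Ssol A b i) (hy : y ∈ Ssol A b k) (h : Incompat A i k x y) :
    agen A b i x hx * agen A b k y hy = 0 := by
  rw [agen, agen, ← map_mul]
  have := RingQuot.mkAlgHom_rel ℂ (SyncRel.orth ⟨x, hx⟩ ⟨y, hy⟩ h)
  rwa [map_zero] at this

lemma agen_sum (i : Fin m) : ∑ x ∈ (Ssol A b i).attach, agen A b i x.1 x.2 = 1 := by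
  have h := RingQuot.mkAlgHom_rel ℂ (SyncRel.sum_one (A := A) (b := b) i)
  rw [map_sum, map_one] at h
  exact h

end GA

end Proof
section Hom

variable {p m n : ℕ} [NeZero p] (A : Matrix (Fin m) (Fin n) (ZMod p)) (b : Fin m → ZMod p)

/-- the image of the generator `e_{v,x}` under the homomorphism -/
noncomputable def F0 :
    (SyncGen A b ⊕ SyncGen A (0 : Fin m → ZMod p)) ×
      (SyncGen A b ⊕ SyncGen A (0 : Fin m → ZMod p)) → GameAlg A b
  | (Sum.inl v, Sum.inr w) =>
      if h : w.1 = v.1 then agen A b v.1 (v.2.1 + w.2.1) (add_mem_Ssol v.2.2 (h ▸ w.2.2)) else 0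
  | (Sum.inr w, Sum.inl v) =>
      if h : w.1 = v.1 then agen A b v.1 (v.2.1 + w.2.1) (add_mem_Ssol v.2.2 (h ▸ w.2.2)) else 0
  | (Sum.inl _, Sum.inl _) => 0
  | (Sum.inr _, Sum.inr _) => 0

lemma F0_ll (v w) : F0 A b (Sum.inl v, Sum.inl w) = 0 := rfl
lemma F0_rr (v w) : F0 A b (Sum.inr v, Sum.inr w) = 0 := rfl
lemma F0_lr (v : SyncGen A b) (w : SyncGen A (0 : Fin m → ZMod p)) (h : w.1 = v.1) :
    F0 A b (Sum.inl v, Sum.inr w)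
      = agen A b v.1 (v.2.1 + w.2.1) (add_mem_Ssol v.2.2 (h ▸ w.2.2)) := dif_pos h
lemma F0_rl (v : SyncGen A b) (w : SyncGen A (0 : Fin m → ZMod p)) (h : w.1 = v.1) :
    F0 A b (Sum.inr w, Sum.inl v)
      = agen A b v.1 (v.2.1 + w.2.1) (add_mem_Ssol v.2.2 (h ▸ w.2.2)) := dif_pos h
lemma F0_lr_ne (v : SyncGen A b) (w : SyncGen A (0 : Fin m → ZMod p)) (h : ¬ w.1 = v.1) :
    F0 A b (Sum.inl v, Sum.inr w) = 0 := dif_neg h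
lemma F0_rl_ne (v : SyncGen A b) (w : SyncGen A (0 : Fin m → ZMod p)) (h : ¬ w.1 = v.1) :
    F0 A b (Sum.inr w, Sum.inl v) = 0 := dif_neg h

lemma F0_sa (g) : star (F0 A b g) = F0 A b g := by
  obtain ⟨v | v, w | w⟩ := g
  · rw [F0_ll, star_zero]
  · by_cases h : w.1 = v.1
    · rw [F0_lr A b v w h, star_agen]
    · rw [F0_lr_ne A b v w h, star_zero]
  · by_cases h : v.1 = w.1
    · rw [F0_rl A b w v h, star_agen]
    · rw [F0_rl_ne A b w v h, star_zero]
  · rw [F0_rr, star_zero]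

lemma F0_idem (g) : F0 A b g * F0 A b g = F0 A b g := by
  obtain ⟨v | v, w | w⟩ := g
  · rw [F0_ll, mul_zero]
  · by_cases h : w.1 = v.1
    · rw [F0_lr A b v w h, agen_idem]
    · rw [F0_lr_ne A b v w h, mul_zero]
  · by_cases h : v.1 = w.1
    · rw [F0_rl A b w v h, agen_idem]
    · rw [F0_rl_ne A b w v h, mul_zero]
  · rw [F0_rr, mul_zero]

lemma F0_sum_left (v : SyncGen A b) :
    ∑ o : SyncGen A b ⊕ SyncGen A (0 : Fin m → ZMod p), F0 A b (Sum.inl v, o) = 1 := by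
  obtain ⟨i, x, hx⟩ := v
  rw [Fintype.sum_sum_type]
  have h1 : ∑ o : SyncGen A b, F0 A b (Sum.inl ⟨i, ⟨x, hx⟩⟩, Sum.inl o) = 0 := by
    simp [F0_ll]
  rw [h1, zero_add, ← Finset.univ_sigma_univ, Finset.sum_sigma]
  rw [Finset.sum_eq_single i]
  · rw [Finset.univ_eq_attach, ← agen_sum A b i]
    refine Finset.sum_nbij'
      (fun y => (⟨x + y.1, add_mem_Ssol hx y.2⟩ : {z // z ∈ Ssol A b i}))
      (fun z => (⟨z.1 - x, sub_mem_Ssol0 z.2 hx⟩ : {y // y ∈ Ssol A (0 : Fin m → ZMod p) i}))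
      (fun _ _ => Finset.mem_attach _ _) (fun _ _ => Finset.mem_attach _ _)
      (fun y _ => Subtype.ext (add_sub_cancel_left x y.1))
      (fun z _ => Subtype.ext (add_sub_cancel x z.1))
      (fun y _ => F0_lr A b ⟨i, ⟨x, hx⟩⟩ ⟨i, y⟩ rfl)
  · intro k _ hk
    exact Finset.sum_eq_zero fun y _ => F0_lr_ne A b ⟨i, ⟨x, hx⟩⟩ ⟨k, y⟩ hk
  · exact fun h => absurd (Finset.mem_univ i) h

lemma F0_sum_right (w : SyncGen A (0 : Fin m → ZMod p)) :
    ∑ o : SyncGen A b ⊕ SyncGen A (0 : Fin m → ZMod p), F0 A b (Sum.inr w, o) = 1 := by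
  obtain ⟨k, y, hy⟩ := w
  rw [Fintype.sum_sum_type]
  have h1 : ∑ o : SyncGen A (0 : Fin m → ZMod p), F0 A b (Sum.inr ⟨k, ⟨y, hy⟩⟩, Sum.inr o) = 0 := by
    simp [F0_rr]
  rw [h1, add_zero, ← Finset.univ_sigma_univ, Finset.sum_sigma]
  rw [Finset.sum_eq_single k]
  · rw [Finset.univ_eq_attach, ← agen_sum A b k]
    refine Finset.sum_nbij'
      (fun x => (⟨x.1 + y, add_mem_Ssol x.2 hy⟩ : {z // z ∈ Ssol A b k}))
      (fun z => (⟨z.1 - y, sub_mem_Ssolb z.2 hy⟩ : {x // x ∈ Ssol A b k}))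
      (fun _ _ => Finset.mem_attach _ _) (fun _ _ => Finset.mem_attach _ _)
      (fun x _ => Subtype.ext (add_sub_cancel_right x.1 y))
      (fun z _ => Subtype.ext (sub_add_cancel z.1 y))
      (fun x _ => F0_rl A b ⟨k, x⟩ ⟨k, ⟨y, hy⟩⟩ rfl)
  · intro i _ hik
    exact Finset.sum_eq_zero fun x _ => F0_rl_ne A b ⟨i, x⟩ ⟨k, ⟨y, hy⟩⟩ (fun h => hik h.symm)
  · exact fun h => absurd (Finset.mem_univ k) h

end Hom
section Hom2

variable {p m n : ℕ} [NeZero p] (A : Matrix (Fin m) (Fin n) (ZMod p)) (b : Fin m → ZMod p)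

lemma isoWin_swap {VG VH : Type*} (G : SimpleGraph VG) (H : SimpleGraph VH)
    (v w x y : VG ⊕ VH) (h : IsoWin G H v w x y) : IsoWin G H w v y x := by
  obtain v | v := v <;> obtain w | w := w <;> obtain x | x := x <;> obtain y | y := y <;>
    first
      | exact h
      | exact ⟨eq_comm.trans (h.1.trans eq_comm),
          (G.adj_comm _ _).trans (h.2.trans (H.adj_comm _ _))⟩
      | exact ⟨eq_comm.trans (h.1.trans eq_comm),
          (H.adj_comm _ _).trans (h.2.trans (G.adj_comm _ _))⟩

lemma F0_orth {v w x y : SyncGen A b ⊕ SyncGen A (0 : Fin m → ZMod p)}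
    (h : ¬ IsoWin (lsGraph A b) (lsGraph A (0 : Fin m → ZMod p)) v w x y) :
    F0 A b (v, x) * F0 A b (w, y) = 0 := by
  obtain v | v := v <;> obtain x | x := x
  · rw [F0_ll, zero_mul]
  case inl.inr =>
    obtain w | w := w <;> obtain y | y := y
    · rw [F0_ll, mul_zero]
    case inl.inr =>
      -- main case 1 : inputs in G, outputs in H
      by_cases h1 : x.1 = v.1
      case neg => rw [F0_lr_ne A b v x h1, zero_mul]
      by_cases h2 : y.1 = w.1
      case neg => rw [F0_lr_ne A b w y h2, mul_zero]
      rw [F0_lr A b v x h1, F0_lr A b w y h2]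
      obtain ⟨i, xv, hxv⟩ := v
      obtain ⟨i', xo, hxo⟩ := x
      obtain ⟨k, yv, hyv⟩ := w
      obtain ⟨k', yo, hyo⟩ := y
      cases h1
      cases h2
      apply agen_mul_incompat
      by_contra hc
      obtain ⟨k1, k2⟩ := key_lemma hxv hxo hyv hyo hc
      refine h ⟨?_, by exact k2⟩
      rw [sg_eq_iff, sg_eq_iff]
      exact and_congr_right k1
    · exact absurd trivial h
    · rw [F0_rr, mul_zero]
  case inr.inl =>
    obtain w | w := w <;> obtain y | y := y
    · rw [F0_ll, mul_zero]
    · exact absurd trivial h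
    case inr.inl =>
      -- main case 2 : inputs in H, outputs in G
      by_cases h1 : v.1 = x.1
      case neg => rw [F0_rl_ne A b x v h1, zero_mul]
      by_cases h2 : w.1 = y.1
      case neg => rw [F0_rl_ne A b y w h2, mul_zero]
      rw [F0_rl A b x v h1, F0_rl A b y w h2]
      obtain ⟨i, xo, hxo⟩ := v
      obtain ⟨i', xv, hxv⟩ := x
      obtain ⟨k, yo, hyo⟩ := w
      obtain ⟨k', yv, hyv⟩ := y
      cases h1
      cases h2
      apply agen_mul_incompat
      by_contra hc
      obtain ⟨k1, k2⟩ := key_lemma hxv hxo hyv hyo hc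
      refine h ⟨?_, by exact k2.symm⟩
      rw [sg_eq_iff, sg_eq_iff]
      exact and_congr_right fun hik => (k1 hik).symm
    · rw [F0_rr, mul_zero]
  · rw [F0_rr, zero_mul]

/-- the algebra homomorphism from the free `*`-algebra of the isomorphism game -/
noncomputable def Fhom :
    FreeStarAlg ((SyncGen A b ⊕ SyncGen A (0 : Fin m → ZMod p)) ×
      (SyncGen A b ⊕ SyncGen A (0 : Fin m → ZMod p))) →ₐ[ℂ] GameAlg A b :=
  MonoidAlgebra.lift ℂ (GameAlg A b) _ (FreeMonoid.lift (F0 A b))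

lemma Fhom_Xg (g) : Fhom A b (Xg g) = F0 A b g := by
  rw [Xg, show (MonoidAlgebra.of ℂ _ (FreeMonoid.of g) :
      FreeStarAlg ((SyncGen A b ⊕ SyncGen A (0 : Fin m → ZMod p)) × _))
      = MonoidAlgebra.single (FreeMonoid.of g) 1 from rfl]
  rw [Fhom, MonoidAlgebra.lift_single, FreeMonoid.lift_eval_of, one_smul]

lemma Fhom_rel : ∀ a c, IsoRel (lsGraph A b) (lsGraph A (0 : Fin m → ZMod p)) a c →
    Fhom A b a = Fhom A b c := by
  intro a c h
  cases h with
  | idem g =>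
      simp only [map_mul, Fhom_Xg]
      exact F0_idem A b g
  | sum_one v =>
      rw [map_sum, map_one]
      simp only [Fhom_Xg]
      obtain v | v := v
      · exact F0_sum_left A b v
      · exact F0_sum_right A b v
  | orth h =>
      simp only [map_mul, Fhom_Xg, map_zero]
      exact F0_orth A b h
  | orth' h =>
      simp only [map_mul, Fhom_Xg, map_zero]
      exact F0_orth A b fun hw => h (isoWin_swap _ _ _ _ _ _ hw)

end Hom2
section Hom3

variable {p m n : ℕ} [NeZero p] (A : Matrix (Fin m) (Fin n) (ZMod p)) (b : Fin m → ZMod p)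

lemma lift_star (l : FreeMonoid ((SyncGen A b ⊕ SyncGen A (0 : Fin m → ZMod p)) ×
    (SyncGen A b ⊕ SyncGen A (0 : Fin m → ZMod p)))) :
    star (FreeMonoid.lift (F0 A b) l) = FreeMonoid.lift (F0 A b) (star l) := by
  refine FreeMonoid.recOn l ?_ ?_
  · rw [map_one, star_one, star_one, map_one]
  · intro g l ih
    rw [map_mul, star_mul, ih, FreeMonoid.lift_eval_of, F0_sa,
      show star (FreeMonoid.of g * l) = star l * star (FreeMonoid.of g) from star_mul _ _,
      FreeMonoid.star_of, map_mul, FreeMonoid.lift_eval_of]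

lemma star_algebraMap_free {X : Type*} (c : ℂ) :
    star (algebraMap ℂ (FreeStarAlg X) c) = algebraMap ℂ (FreeStarAlg X) (starRingEnd ℂ c) := by
  show mstar (MonoidAlgebra.single 1 c) = MonoidAlgebra.single 1 (starRingEnd ℂ c)
  rw [mstar_single, star_one]

lemma star_algebraMap_game (c : ℂ) :
    star (algebraMap ℂ (GameAlg A b) c) = algebraMap ℂ (GameAlg A b) (starRingEnd ℂ c) := by
  rw [← (RingQuot.mkAlgHom ℂ (SyncRel A b)).commutes c, star_mk_sync, star_algebraMap_free,
    (RingQuot.mkAlgHom ℂ (SyncRel A b)).commutes]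

lemma star_smul_game (c : ℂ) (y : GameAlg A b) :
    star (c • y) = (starRingEnd ℂ c) • star y := by
  rw [Algebra.smul_def, star_mul, star_algebraMap_game, Algebra.smul_def,
    ← Algebra.commutes]

lemma Fhom_star (a) : Fhom A b (star a) = star (Fhom A b a) := by
  induction a using MonoidAlgebra.induction_linear with
  | zero => rw [star_zero, map_zero, star_zero]
  | add f g hf hg => rw [star_add, map_add, map_add, star_add, hf, hg]
  | single l c =>
      rw [show star (MonoidAlgebra.single l c :
            FreeStarAlg ((SyncGen A b ⊕ SyncGen A (0 : Fin m → ZMod p)) × _))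
          = MonoidAlgebra.single (star l) (starRingEnd ℂ c) from mstar_single l c]
      rw [Fhom, MonoidAlgebra.lift_single, MonoidAlgebra.lift_single, ← lift_star,
        star_smul_game]

lemma star_mk_iso (a : FreeStarAlg ((SyncGen A b ⊕ SyncGen A (0 : Fin m → ZMod p)) ×
    (SyncGen A b ⊕ SyncGen A (0 : Fin m → ZMod p)))) :
    star (RingQuot.mkAlgHom ℂ (IsoRel (lsGraph A b) (lsGraph A (0 : Fin m → ZMod p))) a)
      = RingQuot.mkAlgHom ℂ (IsoRel (lsGraph A b) (lsGraph A (0 : Fin m → ZMod p))) (star a) := by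
  simp only [RingQuot.mkAlgHom_def, RingQuot.mkRingHom_def, AlgHom.coe_mk, RingHom.coe_mk,
    MonoidHom.coe_mk, OneHom.coe_mk]
  exact rfl

/-- the algebra homomorphism of Statement 18 -/
noncomputable def phi0 : IsoAlg (lsGraph A b) (lsGraph A (0 : Fin m → ZMod p)) →ₐ[ℂ]
    GameAlg A b :=
  RingQuot.liftAlgHom ℂ ⟨Fhom A b, Fhom_rel A b⟩

/-- the `*`-homomorphism of Statement 18 -/
noncomputable def phi18 : IsoAlg (lsGraph A b) (lsGraph A (0 : Fin m → ZMod p)) →⋆ₐ[ℂ]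
    GameAlg A b :=
  { phi0 A b with
    map_star' := fun a => by
      obtain ⟨a, rfl⟩ := RingQuot.mkAlgHom_surjective ℂ _ a
      show phi0 A b _ = star (phi0 A b _)
      rw [star_mk_iso, phi0, RingQuot.liftAlgHom_mkAlgHom_apply,
        RingQuot.liftAlgHom_mkAlgHom_apply, Fhom_star] }

lemma phi18_egen (v x : SyncGen A b ⊕ SyncGen A (0 : Fin m → ZMod p)) :
    phi18 A b (egen (lsGraph A b) (lsGraph A (0 : Fin m → ZMod p)) v x) = F0 A b (v, x) := by
  show (RingQuot.liftAlgHom ℂ ⟨Fhom A b, Fhom_rel A b⟩)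
      (RingQuot.mkAlgHom ℂ _ (Xg (v, x))) = _
  rw [RingQuot.liftAlgHom_mkAlgHom_apply, Fhom_Xg]

end Hom3


/-- There is a unital `*`-homomorphism
`φ : 𝒜(Iso(G_{A,b},G_{A,0})) → 𝒜(syncLCS(A,b))` sending the generator with input `(i,x)`
and output `(j,y)` (equivalently input `(j,y)` and output `(i,x)`) to `δ_{ij}·a_{i,x+y}`,
and all generators whose input and output lie in the same graph to `0`. -/
theorem statement18 (p : ℕ) [Fact p.Prime] {m n : ℕ} (A : Matrix (Fin m) (Fin n) (ZMod p))
    (b : Fin m → ZMod p) :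
    ∃ φ : IsoAlg (lsGraph A b) (lsGraph A (0 : Fin m → ZMod p)) →⋆ₐ[ℂ] GameAlg A b,
      (∀ (i : Fin m) (x y : Fin n → ZMod p) (hx : x ∈ Ssol A b i)
          (hy : y ∈ Ssol A (0 : Fin m → ZMod p) i) (hxy : x + y ∈ Ssol A b i),
        φ (egen (lsGraph A b) (lsGraph A (0 : Fin m → ZMod p))
            (Sum.inl ⟨i, ⟨x, hx⟩⟩) (Sum.inr ⟨i, ⟨y, hy⟩⟩)) = agen A b i (x + y) hxy ∧
        φ (egen (lsGraph A b) (lsGraph A (0 : Fin m → ZMod p))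
            (Sum.inr ⟨i, ⟨y, hy⟩⟩) (Sum.inl ⟨i, ⟨x, hx⟩⟩)) = agen A b i (x + y) hxy) ∧
      (∀ (i j : Fin m), i ≠ j → ∀ (x : Fin n → ZMod p) (hx : x ∈ Ssol A b i)
          (y : Fin n → ZMod p) (hy : y ∈ Ssol A (0 : Fin m → ZMod p) j),
        φ (egen (lsGraph A b) (lsGraph A (0 : Fin m → ZMod p))
            (Sum.inl ⟨i, ⟨x, hx⟩⟩) (Sum.inr ⟨j, ⟨y, hy⟩⟩)) = 0 ∧
        φ (egen (lsGraph A b) (lsGraph A (0 : Fin m → ZMod p))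
            (Sum.inr ⟨j, ⟨y, hy⟩⟩) (Sum.inl ⟨i, ⟨x, hx⟩⟩)) = 0) ∧
      (∀ v w : SyncGen A b,
        φ (egen (lsGraph A b) (lsGraph A (0 : Fin m → ZMod p))
            (Sum.inl v) (Sum.inl w)) = 0) ∧
      (∀ v w : SyncGen A (0 : Fin m → ZMod p),
        φ (egen (lsGraph A b) (lsGraph A (0 : Fin m → ZMod p))
            (Sum.inr v) (Sum.inr w)) = 0) := by
  refine ⟨phi18 A b, ?_, ?_, ?_, ?_⟩
  · intro i x y hx hy hxy
    constructor
    · rw [phi18_egen, F0_lr A b ⟨i, ⟨x, hx⟩⟩ ⟨i, ⟨y, hy⟩⟩ rfl]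
    · rw [phi18_egen, F0_rl A b ⟨i, ⟨x, hx⟩⟩ ⟨i, ⟨y, hy⟩⟩ rfl]
  · intro i j hij x hx y hy
    constructor
    · rw [phi18_egen]
      exact F0_lr_ne A b ⟨i, ⟨x, hx⟩⟩ ⟨j, ⟨y, hy⟩⟩ fun h => hij h.symm
    · rw [phi18_egen]
      exact F0_rl_ne A b ⟨i, ⟨x, hx⟩⟩ ⟨j, ⟨y, hy⟩⟩ fun h => hij h.symm
  · intro v w
    rw [phi18_egen]
    exact F0_ll A b v w
  · intro v w
    rw [phi18_egen]
    exact F0_rr A b v w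

end
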